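/- (Lemma 1, second inclusion.) Suppose Assumption A1 holds for g, and suppose the base set D satisfies Z*_{t',s} ⊆ D for every t' ≥ s. Then for every t ≥ s and every integer h > 0, one has Z*_{t+h,s} ⊆ Z_{t+1,s}. -/
import Mathlib


/-- The functional cost of candidate change `s` at time `t`, evaluated at mean `μ`:
`f̃_{t,s}(μ) = F(s) + Σ_{i=s+1}^{t} (y i − μ)² + α − β·g(t−s)`. -/
noncomputable def ftilde (y F : ℕ → ℝ) (α β : ℝ) (g : ℕ → ℝ) (t s : ℕ) (μ : ℝ) : ℝ :=
  F s + ∑ i ∈ Finset.Icc (s + 1) t, (y i - μ) ^ 2 + α - β * g (t - s)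

/-- `I_{t,s,s'}`: the set of means on which change `s` beats change `s'` at time `t`. -/
def Iset (y F : ℕ → ℝ) (α β : ℝ) (g : ℕ → ℝ) (t s s' : ℕ) : Set ℝ :=
  {μ : ℝ | ftilde y F α β g t s μ ≤ ftilde y F α β g t s' μ}

/-- `I_{∞,s,s'}`: the limiting comparison set as `t → ∞`. -/
def Iinf (y F : ℕ → ℝ) (s s' : ℕ) : Set ℝ :=
  {μ : ℝ | F s - F s' + ∑ i ∈ Finset.Icc (s + 1) s', (y i - μ) ^ 2 ≤ 0}

/-- `Z*_{t,s}`: the exact living set of change `s` at time `t` (ties between equal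
costs are assigned to the older change). -/
noncomputable def Zstar (y F : ℕ → ℝ) (α β : ℝ) (g : ℕ → ℝ) (t s : ℕ) : Set ℝ :=
  {μ : ℝ | (∀ s'' : ℕ, s'' < s → ftilde y F α β g t s μ < ftilde y F α β g t s'' μ) ∧
           (∀ s' : ℕ, s < s' → s' ≤ t → ftilde y F α β g t s μ ≤ ftilde y F α β g t s' μ)}

/-- Difference of two functional costs at the same time `t`. -/
lemma ftilde_sub (y F : ℕ → ℝ) (α β : ℝ) (g : ℕ → ℝ) {s s' t : ℕ}
    (h1 : s ≤ s') (h2 : s' ≤ t) (μ : ℝ) :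
    ftilde y F α β g t s μ - ftilde y F α β g t s' μ
      = (F s - F s' + ∑ i ∈ Finset.Icc (s + 1) s', (y i - μ) ^ 2)
        - β * (g (t - s) - g (t - s')) := by
  unfold ftilde
  rw [show Finset.Icc (s+1) t = Finset.Ioc s t from (Finset.Icc_add_one_left_eq_Ioc s t),
    show Finset.Icc (s+1) s' = Finset.Ioc s s' from (Finset.Icc_add_one_left_eq_Ioc s s'),
    show Finset.Icc (s'+1) t = Finset.Ioc s' t from (Finset.Icc_add_one_left_eq_Ioc s' t),
    ← Finset.sum_Ioc_consecutive _ h1 h2]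
  ring

/-- Future part: membership in `Z*_{T,s}` forces membership in `I_{t+1,s,s'}`. -/
lemma mem_Iset_of_Zstar (y F : ℕ → ℝ) (α β : ℝ) (hβ : 0 ≤ β) (g : ℕ → ℝ)
    (hA1 : ∀ s s' : ℕ, s < s' →
      (∀ t₁ t₂ : ℕ, s' < t₁ → t₁ ≤ t₂ →
        g (t₁ - s') - g (t₁ - s) ≤ g (t₂ - s') - g (t₂ - s)) ∧
      Filter.Tendsto (fun t : ℕ => g (t - s') - g (t - s)) Filter.atTop (nhds 0))
    {s s' t T : ℕ} (hss' : s < s') (hs't : s' ≤ t) (htT : t + 1 ≤ T) {μ : ℝ}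
    (hμ : μ ∈ Zstar y F α β g T s) : μ ∈ Iset y F α β g (t + 1) s s' := by
  have key := hμ.2 s' hss' (by omega)
  have e1 := ftilde_sub y F α β g (le_of_lt hss') (by omega : s' ≤ T) μ
  have e2 := ftilde_sub y F α β g (le_of_lt hss') (by omega : s' ≤ t + 1) μ
  have mono := (hA1 s s' hss').1 (t + 1) T (by omega) htT
  have hm := mul_le_mul_of_nonneg_left mono hβ
  simp only [Iset, Set.mem_setOf_eq] at *
  nlinarith [hm, e1, e2, key]

/-- Past part: membership in `Z*_{T,s}` excludes `I_{∞,s'',s}`. -/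
lemma notMem_Iinf_of_Zstar (y F : ℕ → ℝ) (α β : ℝ) (hβ : 0 ≤ β) (g : ℕ → ℝ)
    (hA1 : ∀ s s' : ℕ, s < s' →
      (∀ t₁ t₂ : ℕ, s' < t₁ → t₁ ≤ t₂ →
        g (t₁ - s') - g (t₁ - s) ≤ g (t₂ - s') - g (t₂ - s)) ∧
      Filter.Tendsto (fun t : ℕ => g (t - s') - g (t - s)) Filter.atTop (nhds 0))
    {s s'' T : ℕ} (hs'' : s'' < s) (hsT : s < T) {μ : ℝ}
    (hμ : μ ∈ Zstar y F α β g T s) : μ ∉ Iinf y F s'' s := by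
  intro hmem
  have key := hμ.1 s'' hs''
  have e1 := ftilde_sub y F α β g (le_of_lt hs'') (by omega : s ≤ T) μ
  -- the nondecreasing sequence `g (τ - s) - g (τ - s'')` converges to 0, so each term ≤ 0
  have ha : g (T - s) - g (T - s'') ≤ 0 := by
    refine ge_of_tendsto ((hA1 s'' s hs'').2) ?_
    filter_upwards [Filter.eventually_ge_atTop T] with τ hτ
    exact (hA1 s'' s hs'').1 T τ hsT hτ
  have hm : β * (g (T - s) - g (T - s'')) ≤ 0 :=
    mul_nonpos_of_nonneg_of_nonpos hβ ha
  simp only [Iinf, Set.mem_setOf_eq] at hmem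
  nlinarith [key, e1, ha, hm, hmem]

/-- Lemma 1, second inclusion: under Assumption A1, if the base set `D`
contains every exact living set `Z*_{t',s}` for `t' ≥ s`, then for any choice of the
families `Future_{t,s}` and `Past_s`, the recursively maintained set `Z_{t,s}` given by
`Z_{s,s} = D` and
`Z_{t+1,s} = (Z_{t,s} ∩ ⋂_{s' ∈ Future_{t,s}} I_{t+1,s,s'}) \ ⋃_{s'' ∈ Past_s} I_{∞,s'',s}`
satisfies `Z*_{t+h,s} ⊆ Z_{t+1,s}` for all `t ≥ s` and every integer `h > 0`. -/
theorem Zstar_future_subset_Z_succ (y F : ℕ → ℝ) (α β : ℝ) (hβ : 0 ≤ β) (g : ℕ → ℝ)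
    (hA1 : ∀ s s' : ℕ, s < s' →
      (∀ t₁ t₂ : ℕ, s' < t₁ → t₁ ≤ t₂ →
        g (t₁ - s') - g (t₁ - s) ≤ g (t₂ - s') - g (t₂ - s)) ∧
      Filter.Tendsto (fun t : ℕ => g (t - s') - g (t - s)) Filter.atTop (nhds 0))
    (s : ℕ) (D : Set ℝ) (hD : ∀ t' : ℕ, s ≤ t' → Zstar y F α β g t' s ⊆ D)
    (Future : ℕ → Set ℕ) (hFuture : ∀ t : ℕ, s ≤ t → Future t ⊆ Set.Icc (s + 1) t)
    (Past : Set ℕ) (hPast : Past ⊆ Set.Iio s)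
    (Z : ℕ → Set ℝ) (hZs : Z s = D)
    (hZrec : ∀ t : ℕ, s ≤ t →
      Z (t + 1) =
        (Z t ∩ ⋂ s' ∈ Future t, Iset y F α β g (t + 1) s s') \
          ⋃ s'' ∈ Past, Iinf y F s'' s) :
    ∀ t : ℕ, s ≤ t → ∀ h : ℕ, 0 < h → Zstar y F α β g (t + h) s ⊆ Z (t + 1) := by
  intro t ht
  induction t, ht using Nat.le_induction with
  | base =>
    intro h hh μ hμ
    rw [hZrec s le_rfl]
    refine ⟨⟨?_, ?_⟩, ?_⟩
    · rw [hZs]; exact hD (s + h) (by omega) hμ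
    · rw [Set.mem_iInter₂]
      intro s' hs'
      have hb := hFuture s le_rfl hs'
      exact mem_Iset_of_Zstar y F α β hβ g hA1 hb.1 hb.2 (by omega) hμ
    · rw [Set.mem_iUnion₂]
      push_neg
      intro s'' hs''
      exact notMem_Iinf_of_Zstar y F α β hβ g hA1 (hPast hs'') (by omega) hμ
  | succ t ht ih =>
    intro h hh μ hμ
    rw [hZrec (t + 1) (by omega)]
    have hμ' : μ ∈ Zstar y F α β g (t + (h + 1)) s := by
      rwa [show t + (h + 1) = t + 1 + h by omega]
    refine ⟨⟨?_, ?_⟩, ?_⟩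
    · exact ih (h + 1) (by omega) hμ'
    · rw [Set.mem_iInter₂]
      intro s' hs'
      have hb := hFuture (t + 1) (by omega) hs'
      exact mem_Iset_of_Zstar y F α β hβ g hA1 hb.1 hb.2 (by omega) hμ
    · rw [Set.mem_iUnion₂]
      push_neg
      intro s'' hs''
      exact notMem_Iinf_of_Zstar y F α β hβ g hA1 (hPast hs'') (by omega) hμ
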